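/- If 0 < x_0 < x_1 < ... < x_{N-1} are positive reals and γ_0 < γ_1 < ... < γ_{N-1} are nonnegative integers, then the generalized Vandermonde matrix with entries x_j^{γ_i} has positive determinant; in particular it is invertible. -/

import Mathlib

open Finset

/-- A nonzero "generalized polynomial" `t ↦ ∑ i, c i * t ^ γ i` with `n` terms and strictly
increasing natural exponents has fewer than `n` distinct positive roots. -/
lemma key_lemma : ∀ (n : ℕ) (γ : Fin n → ℕ), StrictMono γ → ∀ (c : Fin n → ℝ), c ≠ 0 →
    ∀ s : Finset ℝ, (∀ x ∈ s, 0 < x) → (∀ x ∈ s, ∑ i, c i * x ^ γ i = 0) → s.card < n := by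
  intro n
  induction n with
  | zero =>
    intro γ _ c hc
    exact absurd (Subsingleton.elim c 0) hc
  | succ n ih =>
    intro γ hγ c hc s hspos hszero
    -- g is f divided by t ^ γ 0
    set g : ℝ → ℝ := fun t => ∑ i, c i * t ^ (γ i - γ 0) with hg
    have hgzero : ∀ x ∈ s, g x = 0 := by
      intro x hxs
      have hx0 : (0:ℝ) < x := hspos x hxs
      have hfac : (∑ i, c i * x ^ γ i) = x ^ γ 0 * g x := by
        rw [hg, Finset.mul_sum]
        refine Finset.sum_congr rfl fun i _ => ?_
        have hle : γ 0 ≤ γ i := hγ.monotone (Fin.zero_le i)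
        rw [mul_left_comm, ← pow_add, Nat.add_sub_cancel' hle]
      have := hszero x hxs
      rw [hfac] at this
      rcases mul_eq_zero.1 this with h | h
      · exact absurd h (pow_ne_zero _ hx0.ne')
      · exact h
    by_cases hrest : ∀ i : Fin n, c i.succ = 0
    · -- only the first coefficient can be nonzero: no positive roots
      have hc0 : c 0 ≠ 0 := by
        intro h0
        apply hc
        funext i
        rcases Fin.eq_zero_or_eq_succ i with rfl | ⟨j, rfl⟩
        · exact h0
        · exact hrest j
      have hse : s = ∅ := by
        by_contra hne
        obtain ⟨x, hxs⟩ := Finset.nonempty_iff_ne_empty.2 hne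
        have hx0 : (0:ℝ) < x := hspos x hxs
        have := hszero x hxs
        rw [Fin.sum_univ_succ] at this
        have hz : ∑ i : Fin n, c i.succ * x ^ γ i.succ = 0 := by
          refine Finset.sum_eq_zero fun i _ => ?_
          rw [hrest i, zero_mul]
        rw [hz, add_zero] at this
        exact absurd this (mul_ne_zero hc0 (pow_ne_zero _ hx0.ne')).elim
      rw [hse]
      simp
    · push_neg at hrest
      obtain ⟨i₀, hi₀⟩ := hrest
      -- derivative data
      set d : Fin n → ℝ := fun i => c i.succ * ((γ i.succ - γ 0 : ℕ) : ℝ) with hd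
      set δ : Fin n → ℕ := fun i => γ i.succ - γ 0 - 1 with hδ
      have hγ0lt : ∀ i : Fin n, γ 0 < γ i.succ := fun i => hγ (Fin.succ_pos i)
      have hδmono : StrictMono δ := by
        intro i j hij
        have h1 := hγ0lt i
        have h2 : γ i.succ < γ j.succ := hγ (by simpa using hij)
        simp only [hδ]
        omega
      have hdne : d ≠ 0 := by
        intro h
        have := congrFun h i₀
        simp only [hd, Pi.zero_apply, mul_eq_zero] at this
        rcases this with h | h
        · exact hi₀ h
        · have := hγ0lt i₀
          rw [Nat.cast_eq_zero] at h
          omega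
      set gd : ℝ → ℝ := fun t => ∑ i, d i * t ^ δ i with hgd
      have hderiv : ∀ t : ℝ, HasDerivAt g (gd t) t := by
        intro t
        have h1 : HasDerivAt g (∑ i : Fin (n+1),
            c i * (((γ i - γ 0 : ℕ) : ℝ) * t ^ (γ i - γ 0 - 1))) t := by
          apply HasDerivAt.fun_sum
          intro i _
          exact (hasDerivAt_pow (γ i - γ 0) t).const_mul (c i)
        convert h1 using 1
        rw [Fin.sum_univ_succ]
        simp only [Nat.sub_self, Nat.cast_zero, zero_mul, mul_zero, zero_add]
        refine Finset.sum_congr rfl fun i _ => ?_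
        simp only [hgd, hd, hδ]
        ring
      have hgcont : Continuous g := by
        apply continuous_finset_sum
        intro i _
        exact continuous_const.mul (continuous_pow _)
      -- suppose too many roots
      by_contra hcard
      push_neg at hcard
      obtain ⟨t, hts, htcard⟩ := Finset.exists_subset_card_eq hcard
      set e := t.orderIsoOfFin htcard with he
      have hroot : ∀ i : Fin (n+1), g ((e i : ℝ)) = 0 :=
        fun i => hgzero _ (hts (e i).2)
      have hpose : ∀ i : Fin (n+1), (0:ℝ) < (e i : ℝ) :=
        fun i => hspos _ (hts (e i).2)
      have hchoice : ∀ i : Fin n, ∃ ξ : ℝ,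
          ξ ∈ Set.Ioo ((e i.castSucc : ℝ)) ((e i.succ : ℝ)) ∧ gd ξ = 0 := by
        intro i
        have hab : ((e i.castSucc : ℝ)) < ((e i.succ : ℝ)) := by
          exact_mod_cast e.strictMono (Fin.castSucc_lt_succ : i.castSucc < i.succ)
        obtain ⟨ξ, hξmem, hξ⟩ := exists_hasDerivAt_eq_zero hab
          (hgcont.continuousOn) (by rw [hroot, hroot])
          (fun y _ => hderiv y)
        exact ⟨ξ, hξmem, hξ⟩
      choose ξ hξmem hξzero using hchoice
      have hξmono : StrictMono ξ := by
        intro i j hij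
        calc ξ i < (e i.succ : ℝ) := (hξmem i).2
        _ ≤ (e j.castSucc : ℝ) := by
            have : i.succ ≤ j.castSucc := by
              have hij' : (i : ℕ) < (j : ℕ) := hij
              rw [Fin.le_def, Fin.val_succ, Fin.coe_castSucc]
              omega
            exact_mod_cast e.monotone this
        _ < ξ j := (hξmem j).1
      have hξpos : ∀ i, 0 < ξ i :=
        fun i => lt_trans (hpose i.castSucc) (hξmem i).1
      have := ih δ hδmono d hdne (Finset.univ.image ξ)
        (by
          intro y hy
          obtain ⟨i, _, rfl⟩ := Finset.mem_image.1 hy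
          exact hξpos i)
        (by
          intro y hy
          obtain ⟨i, _, rfl⟩ := Finset.mem_image.1 hy
          exact hξzero i)
      rw [Finset.card_image_of_injective _ hξmono.injective, Finset.card_univ,
        Fintype.card_fin] at this
      exact lt_irrefl n this

/-- nonvanishing of the generalized Vandermonde determinant -/
lemma det_ne_zero (N : ℕ) (x : Fin N → ℝ) (hx : StrictMono x) (hpos : ∀ j, 0 < x j)
    (γ : Fin N → ℕ) (hγ : StrictMono γ) :
    (Matrix.of fun i j : Fin N => x j ^ γ i).det ≠ 0 := by
  intro hdet
  obtain ⟨v, hvne, hv⟩ := Matrix.exists_vecMul_eq_zero_iff.2 hdet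
  have hcard := key_lemma N γ hγ v hvne (Finset.univ.image x)
    (by
      intro y hy
      obtain ⟨j, _, rfl⟩ := Finset.mem_image.1 hy
      exact hpos j)
    (by
      intro y hy
      obtain ⟨j, _, rfl⟩ := Finset.mem_image.1 hy
      have := congrFun hv j
      simpa [Matrix.vecMul, dotProduct] using this)
  rw [Finset.card_image_of_injective _ hx.injective, Finset.card_univ,
    Fintype.card_fin] at hcard
  exact lt_irrefl N hcard

theorem stmt_5 (N : ℕ) (x : Fin N → ℝ) (hx : StrictMono x) (hpos : ∀ j, 0 < x j)
    (γ : Fin N → ℕ) (hγ : StrictMono γ) :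
    0 < (Matrix.of fun i j : Fin N => x j ^ γ i).det := by
  set b : Fin N → ℝ := fun j => 2 ^ (j : ℕ) with hb
  have hbmono : StrictMono b := fun i j hij => by
    exact pow_lt_pow_right₀ one_lt_two (by exact_mod_cast hij)
  have hbpos : ∀ j, 0 < b j := fun j => pow_pos two_pos _
  set y : ℝ → Fin N → ℝ := fun s j => (1 - s) * x j + s * b j with hy
  have hymono : ∀ s ∈ Set.Icc (0:ℝ) 1, StrictMono (y s) := by
    intro s hs i j hij
    have h1 := hx hij
    have h2 := hbmono hij
    rcases eq_or_lt_of_le hs.1 with h | h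
    · simp only [hy, ← h]; linarith
    · have hs1 : 0 ≤ 1 - s := by linarith [hs.2]
      have := mul_le_mul_of_nonneg_left h1.le hs1
      have := mul_lt_mul_of_pos_left h2 h
      simp only [hy]; linarith
  have hypos : ∀ s ∈ Set.Icc (0:ℝ) 1, ∀ j, 0 < y s j := by
    intro s hs j
    have h1 := hpos j
    have h2 := hbpos j
    rcases eq_or_lt_of_le hs.1 with h | h
    · simp only [hy, ← h]; linarith
    · have hs1 : 0 ≤ 1 - s := by linarith [hs.2]
      have := mul_le_mul_of_nonneg_left h1.le hs1
      have := mul_lt_mul_of_pos_left h2 h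
      simp only [hy]; linarith
  set F : ℝ → ℝ := fun s => (Matrix.of fun i j : Fin N => y s j ^ γ i).det with hF
  have hFcont : Continuous F := by
    apply Continuous.matrix_det
    apply continuous_pi; intro i; apply continuous_pi; intro j
    apply Continuous.pow
    fun_prop
  have hFne : ∀ s ∈ Set.Icc (0:ℝ) 1, F s ≠ 0 :=
    fun s hs => det_ne_zero N (y s) (hymono s hs) (hypos s hs) γ hγ
  have hF1 : 0 < F 1 := by
    have heq : (Matrix.of fun i j : Fin N => y 1 j ^ γ i) =
        Matrix.vandermonde (fun i => (2:ℝ) ^ γ i) := by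
      ext i j
      simp only [Matrix.of_apply, Matrix.vandermonde_apply, hy, hb]
      rw [sub_self, zero_mul, zero_add, one_mul, ← pow_mul, ← pow_mul, mul_comm]
    have h2 : F 1 = (Matrix.vandermonde fun i => (2:ℝ) ^ γ i).det :=
      congrArg Matrix.det heq
    rw [h2, Matrix.det_vandermonde]
    apply Finset.prod_pos
    intro i _
    apply Finset.prod_pos
    intro j hj
    have hij : i < j := Finset.mem_Ioi.1 hj
    have : (2:ℝ) ^ γ i < 2 ^ γ j := pow_lt_pow_right₀ one_lt_two (hγ hij)
    linarith
  have hF0 : F 0 = (Matrix.of fun i j : Fin N => x j ^ γ i).det := by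
    have heq0 : (Matrix.of fun i j : Fin N => y 0 j ^ γ i) =
        Matrix.of fun i j : Fin N => x j ^ γ i := by
      ext i j
      simp [hy]
    exact congrArg Matrix.det heq0
  rw [← hF0]
  by_contra hle
  push_neg at hle
  have hF0lt : F 0 < 0 :=
    lt_of_le_of_ne hle (hFne 0 ⟨le_refl 0, zero_le_one⟩)
  have hsub := intermediate_value_Icc (zero_le_one (α := ℝ)) hFcont.continuousOn
  have h0mem : (0:ℝ) ∈ Set.Icc (F 0) (F 1) := ⟨hF0lt.le, hF1.le⟩
  obtain ⟨s, hs, hFs⟩ := hsub h0mem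
  exact hFne s hs hFs
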